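/- Under the stationarity conditions m̄ = m - D ∇_m L(v̄) and d̄ = (d^{-1} + 2 ∇_d L(v̄))^{-1} (element-wise), and assuming H := ∇²L(v̄) + blockdiag(D^{-1}, (1/2)(D^{-1} + 2 diag(∇_d L(v̄)))²) is invertible, the Jacobian J = ∇_θ v̄(θ) of the map θ = (m, d) ↦ v̄(θ) satisfies J = [[D^{-1}, 0], [-diag(∇_m L(v̄)) D^{-1}, (1/2) D^{-2}]] · H^{-1}. -/

import Mathlib

/-- Direction vector in `ℝ^d × ℝ^d` indexed by `Fin d ⊕ Fin d`. -/
def dirVec {d : ℕ} : Fin d ⊕ Fin d → (Fin d → ℝ) × (Fin d → ℝ)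
  | Sum.inl i => (Pi.single i 1, 0)
  | Sum.inr i => (0, Pi.single i 1)

/-- Component of a vector in `ℝ^d × ℝ^d` indexed by `Fin d ⊕ Fin d`. -/
def compOf {d : ℕ} (v : (Fin d → ℝ) × (Fin d → ℝ)) : Fin d ⊕ Fin d → ℝ
  | Sum.inl i => v.1 i
  | Sum.inr i => v.2 i

open Matrix

noncomputable def coordCLM {d : ℕ} : Fin d ⊕ Fin d → ((Fin d → ℝ) × (Fin d → ℝ)) →L[ℝ] ℝ
  | Sum.inl i => (ContinuousLinearMap.proj i).comp (ContinuousLinearMap.fst ℝ _ _)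
  | Sum.inr i => (ContinuousLinearMap.proj i).comp (ContinuousLinearMap.snd ℝ _ _)

@[simp] lemma coordCLM_apply {d : ℕ} (c : Fin d ⊕ Fin d) (v : (Fin d → ℝ) × (Fin d → ℝ)) :
    coordCLM c v = compOf v c := by
  cases c <;> rfl

lemma sum_compOf_smul {d : ℕ} (w : (Fin d → ℝ) × (Fin d → ℝ)) :
    (∑ b : Fin d ⊕ Fin d, compOf w b • dirVec b) = w := by
  rw [Fintype.sum_sum_type]
  refine Prod.ext ?_ ?_ <;>
    simp [dirVec, compOf, Prod.fst_sum, Prod.snd_sum, ← Pi.single_smul, smul_eq_mul, mul_one,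
      Finset.univ_sum_single]

lemma clm_eval_sum {d : ℕ} (φ : ((Fin d → ℝ) × (Fin d → ℝ)) →L[ℝ] ℝ)
    (w : (Fin d → ℝ) × (Fin d → ℝ)) :
    φ w = ∑ b : Fin d ⊕ Fin d, compOf w b * φ (dirVec b) := by
  conv_lhs => rw [← sum_compOf_smul w]
  rw [map_sum]
  simp [smul_eq_mul]

lemma fderiv_repr {d : ℕ} (L : (Fin d → ℝ) × (Fin d → ℝ) → ℝ) :
    fderiv ℝ L = fun w => ∑ c : Fin d ⊕ Fin d,
      (fderiv ℝ L w (dirVec c)) • coordCLM c := by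
  funext w
  refine ContinuousLinearMap.ext fun v => ?_
  rw [clm_eval_sum (fderiv ℝ L w) v]
  simp [mul_comm]

lemma hess_symm {d : ℕ} (L : (Fin d → ℝ) × (Fin d → ℝ) → ℝ)
    (hL : ∀ v, DifferentiableAt ℝ L v)
    (hL2 : ∀ v a, DifferentiableAt ℝ (fun w => fderiv ℝ L w (dirVec a)) v)
    (x : (Fin d → ℝ) × (Fin d → ℝ)) (a b : Fin d ⊕ Fin d) :
    fderiv ℝ (fun w => fderiv ℝ L w (dirVec a)) x (dirVec b)
      = fderiv ℝ (fun w => fderiv ℝ L w (dirVec b)) x (dirVec a) := by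
  have hdiff : DifferentiableAt ℝ (fderiv ℝ L) x := by
    rw [fderiv_repr L]
    exact DifferentiableAt.fun_sum fun c _ => (hL2 x c).smul_const (coordCLM c)
  have hB : HasFDerivAt (fderiv ℝ L) (fderiv ℝ (fderiv ℝ L) x) x := hdiff.hasFDerivAt
  have hsymm := second_derivative_symmetric (fun y => (hL y).hasFDerivAt) hB
  have key : ∀ c e : Fin d ⊕ Fin d,
      fderiv ℝ (fun w => fderiv ℝ L w (dirVec c)) x (dirVec e)
        = fderiv ℝ (fderiv ℝ L) x (dirVec e) (dirVec c) := by
    intro c e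
    have hcomp : HasFDerivAt (fun w => fderiv ℝ L w (dirVec c))
        ((ContinuousLinearMap.apply ℝ ℝ (dirVec c)).comp (fderiv ℝ (fderiv ℝ L) x)) x :=
      ((ContinuousLinearMap.apply ℝ ℝ (dirVec c)).hasFDerivAt).comp x hB
    rw [hcomp.fderiv]
    simp
  rw [key a b, key b a, hsymm]

/-- Implicit Jacobian formula (Lemma 1 of iBaML): if `v̄(θ) = (m̄(θ), d̄(θ))`
satisfies the stationarity conditions `m̄ = m - D ∇_m L(v̄)` and
`d̄ = (d⁻¹ + 2∇_d L(v̄))⁻¹` (element-wise) for all `θ = (m, d)`, and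
`H = ∇²L(v̄) + blockdiag(D⁻¹, (1/2)(D⁻¹ + 2 diag(∇_d L(v̄)))²)` is invertible,
then the Jacobian `J = ∇_θ v̄(θ)` satisfies
`J = [[D⁻¹, 0], [-diag(∇_m L(v̄)) D⁻¹, (1/2) D⁻²]] H⁻¹`. -/
theorem implicit_bayesian_jacobian {d : ℕ}
    (L : (Fin d → ℝ) × (Fin d → ℝ) → ℝ)
    (vbar : (Fin d → ℝ) × (Fin d → ℝ) → (Fin d → ℝ) × (Fin d → ℝ))
    (hvbar : ∀ θ, DifferentiableAt ℝ vbar θ)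
    (hL : ∀ v, DifferentiableAt ℝ L v)
    (hL2 : ∀ v a, DifferentiableAt ℝ (fun w => fderiv ℝ L w (dirVec a)) v)
    (hstat_m : ∀ θ : (Fin d → ℝ) × (Fin d → ℝ), ∀ i,
      (vbar θ).1 i = θ.1 i - θ.2 i * fderiv ℝ L (vbar θ) (dirVec (Sum.inl i)))
    (hstat_d : ∀ θ : (Fin d → ℝ) × (Fin d → ℝ), ∀ i,
      (vbar θ).2 i = ((θ.2 i)⁻¹ + 2 * fderiv ℝ L (vbar θ) (dirVec (Sum.inr i)))⁻¹)
    (m dvec : Fin d → ℝ) (hd : ∀ i, 0 < dvec i)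
    (Hess H G J : Matrix (Fin d ⊕ Fin d) (Fin d ⊕ Fin d) ℝ)
    (hHess : ∀ a b, Hess a b =
      fderiv ℝ (fun w => fderiv ℝ L w (dirVec a)) (vbar (m, dvec)) (dirVec b))
    (hH : H = Hess + Matrix.fromBlocks
      (Matrix.diagonal fun i => (dvec i)⁻¹) (0 : Matrix (Fin d) (Fin d) ℝ) 0
      ((1 / 2 : ℝ) • ((Matrix.diagonal fun i => (dvec i)⁻¹) +
        (2 : ℝ) • Matrix.diagonal
          (fun i => fderiv ℝ L (vbar (m, dvec)) (dirVec (Sum.inr i)))) ^ 2))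
    (hG : G = Matrix.fromBlocks
      (Matrix.diagonal fun i => (dvec i)⁻¹) (0 : Matrix (Fin d) (Fin d) ℝ)
      (-(Matrix.diagonal
          (fun i => fderiv ℝ L (vbar (m, dvec)) (dirVec (Sum.inl i))) *
        Matrix.diagonal fun i => (dvec i)⁻¹))
      ((1 / 2 : ℝ) • (Matrix.diagonal fun i => (dvec i)⁻¹) ^ 2))
    (hJ : ∀ a b, J a b = compOf (fderiv ℝ vbar (m, dvec) (dirVec a)) b)
    (hinv : IsUnit H) :
    J = G * H⁻¹ := by
  classical
  have hd0 : ∀ i, dvec i ≠ 0 := fun i => ne_of_gt (hd i)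
  -- abbreviations for the point and gradient values
  set gm : Fin d → ℝ := fun i => fderiv ℝ L (vbar (m, dvec)) (dirVec (Sum.inl i)) with hgm
  set gd : Fin d → ℝ := fun i => fderiv ℝ L (vbar (m, dvec)) (dirVec (Sum.inr i)) with hgd
  -- key scalar equations obtained by implicit differentiation
  have main : ∀ a : Fin d ⊕ Fin d, ∀ i : Fin d,
      ((∑ b, J a b * Hess b (Sum.inl i)) + (dvec i)⁻¹ * J a (Sum.inl i)
        = (dvec i)⁻¹ * (compOf (dirVec a) (Sum.inl i) - compOf (dirVec a) (Sum.inr i) * gm i))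
      ∧ ((∑ b, J a b * Hess b (Sum.inr i))
            + (1/2) * ((dvec i)⁻¹ + 2 * gd i)^2 * J a (Sum.inr i)
          = compOf (dirVec a) (Sum.inr i) * ((1/2) * ((dvec i)⁻¹)^2)) := by
    intro a i
    set u : (Fin d → ℝ) × (Fin d → ℝ) := dirVec a with hu
    have hline : HasDerivAt (fun t : ℝ => (m, dvec) + t • u) u 0 := by
      simpa using ((hasDerivAt_id (0 : ℝ)).smul_const u).const_add (m, dvec)
    have hV : HasDerivAt (fun t : ℝ => vbar ((m, dvec) + t • u))
        (fderiv ℝ vbar (m, dvec) u) 0 := by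
      have h1 : HasFDerivAt vbar (fderiv ℝ vbar (m, dvec)) ((m, dvec) + (0:ℝ) • u) := by
        simpa using (hvbar (m, dvec)).hasFDerivAt
      simpa [Function.comp_def] using h1.comp_hasDerivAt 0 hline
    have hVc : ∀ c, HasDerivAt (fun t : ℝ => compOf (vbar ((m, dvec) + t • u)) c) (J a c) 0 := by
      intro c
      have h2 := (coordCLM c).hasFDerivAt.comp_hasDerivAt 0 hV
      rw [hJ a c, ← hu]
      simpa [Function.comp_def] using h2
    have hGc : ∀ c, HasDerivAt
        (fun t : ℝ => fderiv ℝ L (vbar ((m, dvec) + t • u)) (dirVec c))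
        (∑ b, J a b * Hess b c) 0 := by
      intro c
      have h1 : HasFDerivAt (fun w => fderiv ℝ L w (dirVec c))
          (fderiv ℝ (fun w => fderiv ℝ L w (dirVec c)) (vbar (m, dvec)))
          (vbar ((m, dvec) + (0:ℝ) • u)) := by
        simpa using (hL2 (vbar (m, dvec)) c).hasFDerivAt
      have h2 := h1.comp_hasDerivAt 0 hV
      have h3 : fderiv ℝ (fun w => fderiv ℝ L w (dirVec c)) (vbar (m, dvec))
          (fderiv ℝ vbar (m, dvec) u) = ∑ b, J a b * Hess b c := by
        rw [clm_eval_sum]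
        refine Finset.sum_congr rfl fun b _ => ?_
        rw [hu, ← hJ a b, hHess b c, hess_symm L hL hL2 (vbar (m, dvec)) b c]
      rw [h3] at h2
      simpa [Function.comp_def] using h2
    have hpc : ∀ c, HasDerivAt (fun t : ℝ => compOf ((m, dvec) + t • u) c) (compOf u c) 0 := by
      intro c
      have h2 := (coordCLM c).hasFDerivAt.comp_hasDerivAt 0 hline
      simpa [Function.comp_def] using h2
    have hp1 : ∀ i, HasDerivAt (fun t : ℝ => ((m, dvec) + t • u).1 i) (compOf u (Sum.inl i)) 0 :=
      fun i => hpc (Sum.inl i)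
    have hp2 : ∀ i, HasDerivAt (fun t : ℝ => ((m, dvec) + t • u).2 i) (compOf u (Sum.inr i)) 0 :=
      fun i => hpc (Sum.inr i)
    have hV1 : HasDerivAt (fun t : ℝ => (vbar ((m, dvec) + t • u)).1 i) (J a (Sum.inl i)) 0 :=
      hVc (Sum.inl i)
    have hV2 : HasDerivAt (fun t : ℝ => (vbar ((m, dvec) + t • u)).2 i) (J a (Sum.inr i)) 0 :=
      hVc (Sum.inr i)
    have hval2 : ((m, dvec) + (0:ℝ) • u).2 i = dvec i := by simp
    have hvbar0 : vbar ((m, dvec) + (0:ℝ) • u) = vbar (m, dvec) := by norm_num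
    -- Equation 1
    have E1 : J a (Sum.inl i) = compOf u (Sum.inl i)
        - (compOf u (Sum.inr i) * gm i
            + dvec i * (∑ b, J a b * Hess b (Sum.inl i))) := by
      have funeq : (fun t : ℝ => (vbar ((m, dvec) + t • u)).1 i)
          = fun t : ℝ => ((m, dvec) + t • u).1 i
            - ((m, dvec) + t • u).2 i
              * fderiv ℝ L (vbar ((m, dvec) + t • u)) (dirVec (Sum.inl i)) :=
        funext fun t => hstat_m _ i
      have hrhs := (hp1 i).fun_sub ((hp2 i).fun_mul (hGc (Sum.inl i)))
      rw [← funeq] at hrhs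
      have := hV1.unique hrhs
      rw [hval2, hvbar0] at this
      linear_combination this
    -- set-up for equations 2 and 3
    set X : ℝ → ℝ := fun t => (((m, dvec) + t • u).2 i)⁻¹
        + 2 * fderiv ℝ L (vbar ((m, dvec) + t • u)) (dirVec (Sum.inr i)) with hX
    have hXne0val : ((m, dvec) + (0:ℝ) • u).2 i ≠ 0 := by rw [hval2]; exact hd0 i
    have hXd : HasDerivAt X
        (-(compOf u (Sum.inr i)) / (dvec i) ^ 2 + 2 * (∑ b, J a b * Hess b (Sum.inr i))) 0 := by
      have h1 := ((hp2 i).inv hXne0val).add ((hGc (Sum.inr i)).const_mul 2)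
      rw [hval2] at h1
      exact h1
    have hstatX : ∀ t : ℝ, (vbar ((m, dvec) + t • u)).2 i = (X t)⁻¹ := fun t => hstat_d _ i
    have X0 : X 0 = (dvec i)⁻¹ + 2 * gd i := by
      rw [hX]; simp [hvbar0, hgd]
    -- Equation 2 : d̄ = X * d̄²
    have E2 : J a (Sum.inr i)
        = (-(compOf u (Sum.inr i)) / (dvec i) ^ 2 + 2 * (∑ b, J a b * Hess b (Sum.inr i)))
            * ((vbar (m, dvec)).2 i) ^ 2
          + ((dvec i)⁻¹ + 2 * gd i)
            * (2 * (vbar (m, dvec)).2 i * J a (Sum.inr i)) := by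
      have funeq : (fun t : ℝ => (vbar ((m, dvec) + t • u)).2 i)
          = fun t : ℝ => X t * ((vbar ((m, dvec) + t • u)).2 i) ^ 2 := by
        funext t
        rw [hstatX t]
        rcases eq_or_ne (X t) 0 with h | h
        · simp [h]
        · field_simp
      have hrhs := hXd.fun_mul (hV2.fun_pow 2)
      rw [← funeq] at hrhs
      have := hV2.unique hrhs
      rw [hvbar0, X0] at this
      linear_combination this
    -- Equation 3 : X² * d̄ = X
    have E3 : 2 * ((dvec i)⁻¹ + 2 * gd i)
          * (-(compOf u (Sum.inr i)) / (dvec i) ^ 2 + 2 * (∑ b, J a b * Hess b (Sum.inr i)))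
          * (vbar (m, dvec)).2 i
        + ((dvec i)⁻¹ + 2 * gd i) ^ 2 * J a (Sum.inr i)
        = -(compOf u (Sum.inr i)) / (dvec i) ^ 2
            + 2 * (∑ b, J a b * Hess b (Sum.inr i)) := by
      have funeq : (fun t : ℝ => X t ^ 2 * (vbar ((m, dvec) + t • u)).2 i) = X := by
        funext t
        rw [hstatX t]
        rcases eq_or_ne (X t) 0 with h | h
        · simp [h]
        · field_simp
      have hlhs := (hXd.fun_pow 2).fun_mul hV2
      rw [funeq] at hlhs
      have := hlhs.unique hXd
      rw [hvbar0, X0] at this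
      linear_combination this
    constructor
    · -- K1
      have hinv_d : (dvec i)⁻¹ * dvec i = 1 := inv_mul_cancel₀ (hd0 i)
      linear_combination (dvec i)⁻¹ * E1
        - (∑ b, J a b * Hess b (Sum.inl i)) * hinv_d
    · -- K2
      set db : ℝ := (vbar (m, dvec)).2 i with hdb
      set x0 : ℝ := (dvec i)⁻¹ + 2 * gd i with hx0
      have hdbx : db = x0⁻¹ := by rw [hdb, hx0]; exact hstat_d (m, dvec) i
      rcases eq_or_ne x0 0 with h0 | h0
      · -- degenerate case: db = 0, J a (inr i) = 0, and E3 gives x' = 0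
        have hdb0 : db = 0 := by rw [hdbx, h0]; exact _root_.inv_zero
        have hJ0 : J a (Sum.inr i) = 0 := by
          rw [E2, hdb0, h0]; ring
        rw [h0] at E3
        have hx' : -(compOf u (Sum.inr i)) / (dvec i) ^ 2
            + 2 * (∑ b, J a b * Hess b (Sum.inr i)) = 0 := by
          linear_combination -E3
        rw [h0, hJ0]
        linear_combination (1/2 : ℝ) * hx'
      · have hx0db : x0 * db = 1 := by
          rw [hdbx]; field_simp
        -- from E2 : J = x' * db² + x0 * 2 db J, with x0 db = 1 → J = x' db² + 2 J → x' db² = -J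
        -- hence x' = -x0² J
        have hdbne : db ≠ 0 := by
          rw [hdbx]; exact inv_ne_zero h0
        have hx' : -(compOf u (Sum.inr i)) / (dvec i) ^ 2
            + 2 * (∑ b, J a b * Hess b (Sum.inr i)) = - x0 ^ 2 * J a (Sum.inr i) := by
          have h1 : (-(compOf u (Sum.inr i)) / (dvec i) ^ 2
              + 2 * (∑ b, J a b * Hess b (Sum.inr i))) * db ^ 2 = - J a (Sum.inr i) := by
            linear_combination -E2 - 2 * J a (Sum.inr i) * hx0db
          have h2 : db ^ 2 * x0 ^ 2 = 1 := by
            rw [← mul_pow, mul_comm db x0, hx0db]; norm_num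
          calc -(compOf u (Sum.inr i)) / (dvec i) ^ 2
                + 2 * (∑ b, J a b * Hess b (Sum.inr i))
              = (-(compOf u (Sum.inr i)) / (dvec i) ^ 2
                + 2 * (∑ b, J a b * Hess b (Sum.inr i))) * (db ^ 2 * x0 ^ 2) := by
                rw [h2]; ring
            _ = - x0 ^ 2 * J a (Sum.inr i) := by rw [← mul_assoc, h1]; ring
        linear_combination (1/2 : ℝ) * hx'
  -- Now assemble the matrix identity J * H = G
  have hdet : IsUnit H.det := (Matrix.isUnit_iff_isUnit_det H).mp hinv
  have hXent : ∀ j k : Fin d, (((1 / 2 : ℝ) • ((Matrix.diagonal fun i => (dvec i)⁻¹)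
        + (2 : ℝ) • Matrix.diagonal gd) ^ 2)) j k
      = if j = k then (1/2) * ((dvec j)⁻¹ + 2 * gd j) ^ 2 else 0 := by
    intro j k
    have hdd : (Matrix.diagonal fun i => (dvec i)⁻¹) + (2 : ℝ) • Matrix.diagonal gd
        = Matrix.diagonal (fun j => (dvec j)⁻¹ + 2 * gd j) := by
      rw [← Matrix.diagonal_smul, ← Matrix.diagonal_add]
      rfl
    rw [hdd, Matrix.diagonal_pow, Matrix.smul_apply, Matrix.diagonal_apply]
    split <;> simp [smul_eq_mul]
  have key : J * H = G := by
    ext a c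
    rw [Matrix.mul_apply]
    cases c with
    | inl i =>
      have hsum : ∑ b, J a b * H b (Sum.inl i)
          = (∑ b, J a b * Hess b (Sum.inl i)) + J a (Sum.inl i) * (dvec i)⁻¹ := by
        rw [hH]
        simp only [Matrix.add_apply, mul_add, Finset.sum_add_distrib]
        congr 1
        rw [Fintype.sum_sum_type]
        simp [Matrix.diagonal_apply, mul_ite, Finset.sum_ite_eq', Sum.inl.injEq]
      rw [hsum, hG]
      cases a with
      | inl j =>
        have K1 := (main (Sum.inl j) i).1
        by_cases hji : j = i
        · subst hji
          simp [dirVec, compOf, Pi.single_apply] at K1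
          simp only [Matrix.fromBlocks_apply₁₁, Matrix.diagonal_apply_eq]
          rw [Fintype.sum_sum_type]
          linear_combination K1
        · simp [dirVec, compOf, Pi.single_apply, Ne.symm hji] at K1
          simp only [Matrix.fromBlocks_apply₁₁, Matrix.diagonal_apply_ne _ hji]
          rw [Fintype.sum_sum_type]
          linear_combination K1
      | inr j =>
        have K1 := (main (Sum.inr j) i).1
        by_cases hji : j = i
        · subst hji
          simp [dirVec, compOf, Pi.single_apply] at K1
          simp only [Matrix.fromBlocks_apply₂₁, Matrix.neg_apply,
            Matrix.diagonal_mul_diagonal, Matrix.diagonal_apply_eq]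
          rw [Fintype.sum_sum_type]
          linear_combination K1
        · simp [dirVec, compOf, Pi.single_apply, Ne.symm hji] at K1
          simp only [Matrix.fromBlocks_apply₂₁, Matrix.neg_apply,
            Matrix.diagonal_mul_diagonal, Matrix.diagonal_apply_ne _ hji]
          rw [Fintype.sum_sum_type]
          linear_combination K1
    | inr i =>
      have hsum : ∑ b, J a b * H b (Sum.inr i)
          = (∑ b, J a b * Hess b (Sum.inr i))
            + (1/2) * ((dvec i)⁻¹ + 2 * gd i) ^ 2 * J a (Sum.inr i) := by
        rw [hH]
        simp only [Matrix.add_apply, mul_add, Finset.sum_add_distrib]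
        congr 1
        rw [Fintype.sum_sum_type]
        simp only [Matrix.fromBlocks_apply₁₂, Matrix.fromBlocks_apply₂₂, Matrix.zero_apply,
          mul_zero, Finset.sum_const_zero, zero_add, hXent, mul_ite, Finset.sum_ite_eq',
          Finset.mem_univ, if_true]
        ring
      rw [hsum, hG]
      cases a with
      | inl j =>
        have K2 := (main (Sum.inl j) i).2
        simp [dirVec, compOf, Pi.single_apply] at K2
        simp only [Matrix.fromBlocks_apply₁₂, Matrix.zero_apply]
        rw [Fintype.sum_sum_type]
        linear_combination K2
      | inr j =>
        have K2 := (main (Sum.inr j) i).2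
        by_cases hji : j = i
        · subst hji
          simp [dirVec, compOf, Pi.single_apply] at K2
          simp only [Matrix.fromBlocks_apply₂₂, Matrix.diagonal_pow, Matrix.smul_apply,
            Matrix.diagonal_apply_eq, Pi.pow_apply, smul_eq_mul]
          rw [Fintype.sum_sum_type]
          linear_combination K2
        · simp [dirVec, compOf, Pi.single_apply, Ne.symm hji] at K2
          simp only [Matrix.fromBlocks_apply₂₂, Matrix.diagonal_pow, Matrix.smul_apply,
            Matrix.diagonal_apply_ne _ hji, smul_eq_mul]
          rw [Fintype.sum_sum_type]
          linear_combination K2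
  calc J = J * H * H⁻¹ := by rw [Matrix.mul_assoc, Matrix.mul_nonsing_inv H hdet, Matrix.mul_one]
    _ = G * H⁻¹ := by rw [key]
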